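/- Let M be a symmetric positive definite block matrix with blocks M_vv, M_vh, M_hv = M_vhᵀ, M_hh, and let Q_vv be symmetric positive definite of the same size as M_vv. Define Q_vh := Q_vv M_vv⁻¹ M_vh and Q_hh := M_hh − M_hv M_vv⁻¹ M_vh + M_hv M_vv⁻¹ Q_vv M_vv⁻¹ M_vh. Then the block matrix Q with blocks Q_vv, Q_vh, Q_vhᵀ, Q_hh is symmetric positive definite. -/

import Mathlib

open Matrix

section aux

variable {p q : Type*} [Fintype p] [DecidableEq p] [Fintype q] [DecidableEq q]

/-- If `A` is positive definite and the Schur complement `D - Bᴴ * A⁻¹ * B` is positive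
definite, then the block matrix `fromBlocks A B Bᴴ D` is positive definite. -/
lemma posDef_fromBlocks_of_schur {A : Matrix p p ℝ} (B : Matrix p q ℝ) {D : Matrix q q ℝ}
    (hA : A.PosDef) (hS : (D - Bᴴ * A⁻¹ * B).PosDef) :
    (Matrix.fromBlocks A B Bᴴ D).PosDef := by
  haveI : Invertible A := hA.isUnit.invertible
  refine Matrix.PosDef.of_dotProduct_mulVec_pos ?_ ?_
  · exact (Matrix.IsHermitian.fromBlocks₁₁ B D hA.1).mpr hS.1
  · intro x hx
    rw [← Sum.elim_comp_inl_inr x, dotProduct_mulVec,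
      Matrix.schur_complement_eq₁₁ B D _ _ hA.1]
    by_cases h2 : x ∘ Sum.inr = 0
    · have h1 : x ∘ Sum.inl ≠ 0 := by
        intro h1
        apply hx
        rw [← Sum.elim_comp_inl_inr x, h1, h2]
        ext (i | i) <;> rfl
    -- second term is 0, first term positive
      rw [h2]
      simp only [mulVec_zero, add_zero, star_zero, zero_dotProduct,
        dotProduct_zero, zero_vecMul]
      rw [← dotProduct_mulVec]
      simpa using hA.dotProduct_mulVec_pos h1
    · have first_nonneg : 0 ≤ star (x ∘ Sum.inl + (A⁻¹ * B) *ᵥ (x ∘ Sum.inr)) ᵥ* A ⬝ᵥ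
          (x ∘ Sum.inl + (A⁻¹ * B) *ᵥ (x ∘ Sum.inr)) := by
        rw [← dotProduct_mulVec]
        exact hA.posSemidef.dotProduct_mulVec_nonneg _
      have second_pos : 0 < star (x ∘ Sum.inr) ᵥ* (D - Bᴴ * A⁻¹ * B) ⬝ᵥ (x ∘ Sum.inr) := by
        rw [← dotProduct_mulVec]
        exact hS.dotProduct_mulVec_pos h2
      linarith

end aux

theorem imputed_completion_posDef {n m : ℕ}
    (Mvv : Matrix (Fin n) (Fin n) ℝ) (Mvh : Matrix (Fin n) (Fin m) ℝ)
    (Mhh : Matrix (Fin m) (Fin m) ℝ)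
    (hM : (Matrix.fromBlocks Mvv Mvh Mvhᵀ Mhh).PosDef)
    (Qvv : Matrix (Fin n) (Fin n) ℝ) (hQvv : Qvv.PosDef) :
    (Matrix.fromBlocks Qvv (Qvv * Mvv⁻¹ * Mvh) (Qvv * Mvv⁻¹ * Mvh)ᵀ
      (Mhh - Mvhᵀ * Mvv⁻¹ * Mvh + Mvhᵀ * Mvv⁻¹ * Qvv * Mvv⁻¹ * Mvh)).PosDef := by
  -- Mvv is positive definite
  have hMvv : Mvv.PosDef := by
    refine Matrix.PosDef.of_dotProduct_mulVec_pos ?_ ?_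
    · have := hM.1
      rw [Matrix.isHermitian_fromBlocks_iff] at this
      exact this.1
    · intro x hx
      have hx' : (Sum.elim x 0 : Fin n ⊕ Fin m → ℝ) ≠ 0 := by
        intro h
        apply hx
        ext i
        exact congrFun h (Sum.inl i)
      have := hM.dotProduct_mulVec_pos hx'
      simpa [Matrix.fromBlocks_mulVec, Function.star_sumElim] using this
  haveI : Invertible Mvv := hMvv.isUnit.invertible
  have hMvvsymm : Mvvᵀ = Mvv := hMvv.1
  have hMvvinvsymm : (Mvv⁻¹)ᵀ = Mvv⁻¹ := by
    rw [Matrix.transpose_nonsing_inv, hMvvsymm]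
  have hQvvsymm : Qvvᵀ = Qvv := hQvv.1
  -- the Schur complement of M is positive definite
  have hS : (Mhh - Mvhᵀ * Mvv⁻¹ * Mvh).PosDef := by
    refine Matrix.PosDef.of_dotProduct_mulVec_pos ?_ ?_
    · have := hM.1
      rw [show Mvhᵀ = Mvhᴴ from (Matrix.conjTranspose_eq_transpose_of_trivial _).symm,
        Matrix.IsHermitian.fromBlocks₁₁ _ _ hMvv.1] at this
      exact this
    · intro y hy
      have hy' : (Sum.elim (-((Mvv⁻¹ * Mvh) *ᵥ y)) y : Fin n ⊕ Fin m → ℝ) ≠ 0 := by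
        intro h
        apply hy
        ext i
        exact congrFun h (Sum.inr i)
      have := hM.dotProduct_mulVec_pos hy'
      rw [show Mvhᵀ = Mvhᴴ from (Matrix.conjTranspose_eq_transpose_of_trivial _).symm] at this
      rw [show (Sum.elim (-((Mvv⁻¹ * Mvh) *ᵥ y)) y : Fin n ⊕ Fin m → ℝ)
          = (-((Mvv⁻¹ * Mvh) *ᵥ y)) ⊕ᵥ y from rfl, dotProduct_mulVec,
        Matrix.schur_complement_eq₁₁ Mvh Mhh _ _ hMvv.1, neg_add_cancel] at this
      simpa [dotProduct_mulVec] using this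
  -- now apply the block criterion to Q
  apply posDef_fromBlocks_of_schur _ hQvv
  have key : (Mhh - Mvhᵀ * Mvv⁻¹ * Mvh + Mvhᵀ * Mvv⁻¹ * Qvv * Mvv⁻¹ * Mvh)
      - (Qvv * Mvv⁻¹ * Mvh)ᴴ * Qvv⁻¹ * (Qvv * Mvv⁻¹ * Mvh)
      = Mhh - Mvhᵀ * Mvv⁻¹ * Mvh := by
    have : (Qvv * Mvv⁻¹ * Mvh)ᴴ * Qvv⁻¹ * (Qvv * Mvv⁻¹ * Mvh)
        = Mvhᵀ * Mvv⁻¹ * Qvv * Mvv⁻¹ * Mvh := by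
      haveI : Invertible Qvv := hQvv.isUnit.invertible
      have hc : (Qvv * Mvv⁻¹ * Mvh)ᴴ = Mvhᵀ * Mvv⁻¹ * Qvv := by
        rw [Matrix.conjTranspose_eq_transpose_of_trivial, Matrix.transpose_mul, Matrix.transpose_mul, hMvvinvsymm, hQvvsymm, Matrix.mul_assoc]
      rw [hc]
      calc Mvhᵀ * Mvv⁻¹ * Qvv * Qvv⁻¹ * (Qvv * Mvv⁻¹ * Mvh)
          = Mvhᵀ * Mvv⁻¹ * (Qvv * Qvv⁻¹ * Qvv) * Mvv⁻¹ * Mvh := by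
            simp only [Matrix.mul_assoc]
        _ = Mvhᵀ * Mvv⁻¹ * Qvv * Mvv⁻¹ * Mvh := by
            rw [Matrix.mul_inv_of_invertible, Matrix.one_mul]
    rw [this]
    abel
  rw [key]
  exact hS
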